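/- Let φ be an Orlicz function and let d_φ = sup{u > 0 : φ(s) = k·s for some k ≥ 0 and for all s ∈ [0, u)}. For every closed and bounded interval J = [a, b] with d_φ < a ≤ b < ∞, there exists a constant σ ∈ (0, 1) such that 2·φ(u/2)/φ(u) ≤ σ for all u ∈ J. -/

import Mathlib

/-- For an Orlicz function `φ` and a closed bounded interval
`J = [a, b] ⊆ (d_φ, ∞)`, there is `σ ∈ (0,1)` with `2·φ(u/2)/φ(u) ≤ σ`
for all `u ∈ J`. The constant `d_φ ∈ [0, ∞]` is the supremum of those `u > 0`
such that `φ` is linear on `[0, u)`. -/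
theorem orlicz_sigma_on_interval
    (φ : ℝ → ℝ) (hconv : ConvexOn ℝ (Set.Ici 0) φ) (h0 : φ 0 = 0)
    (hnonneg : ∀ u : ℝ, 0 ≤ u → 0 ≤ φ u) (hnz : ∃ u : ℝ, 0 ≤ u ∧ φ u ≠ 0)
    (a b : ℝ) (hab : a ≤ b)
    (hd : sSup {p : ENNReal | ∃ u : ℝ, 0 < u ∧ p = ENNReal.ofReal u ∧
          ∃ k : ℝ, 0 ≤ k ∧ ∀ s : ℝ, 0 ≤ s → s < u → φ s = k * s}
        < ENNReal.ofReal a) :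
    ∃ σ : ℝ, 0 < σ ∧ σ < 1 ∧ ∀ u : ℝ, a ≤ u → u ≤ b → 2 * φ (u / 2) / φ u ≤ σ := by
  have ha0 : 0 < a := by
    have h1 : (0 : ENNReal) < ENNReal.ofReal a := lt_of_le_of_lt zero_le hd
    exact ENNReal.ofReal_pos.mp h1
  -- Key strict inequality: for all u ≥ a, 2 * φ (u/2) < φ u
  have hkey : ∀ u : ℝ, a ≤ u → 2 * φ (u / 2) < φ u := by
    intro u hu
    have hu0 : 0 < u := lt_of_lt_of_le ha0 hu
    -- convexity: φ (u/2) ≤ φ u / 2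
    have hmid : φ (u / 2) ≤ φ u / 2 := by
      have := hconv.2 (Set.self_mem_Ici) (show u ∈ Set.Ici (0:ℝ) from hu0.le)
        (by norm_num : (0:ℝ) ≤ (1:ℝ)/2) (by norm_num : (0:ℝ) ≤ (1:ℝ)/2) (by norm_num)
      simp only [smul_eq_mul, h0] at this
      have h2 : (1:ℝ)/2 * 0 + 1/2 * u = u / 2 := by ring
      rw [h2] at this
      linarith
    by_contra hcon
    push_neg at hcon
    have heq : φ (u / 2) = φ u / 2 := le_antisymm hmid (by linarith)
    set k : ℝ := φ u / u with hk
    have hk0 : 0 ≤ k := div_nonneg (hnonneg u hu0.le) hu0.le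
    -- upper bound: φ s ≤ k * s for s ∈ [0, u]
    have hupper : ∀ s : ℝ, 0 ≤ s → s ≤ u → φ s ≤ k * s := by
      intro s hs hsu
      have hcomb := hconv.2 (Set.self_mem_Ici) (show u ∈ Set.Ici (0:ℝ) from hu0.le)
        (show (0:ℝ) ≤ 1 - s / u by
          have : s / u ≤ 1 := (div_le_one hu0).mpr hsu
          linarith)
        (div_nonneg hs hu0.le) (by ring)
      simp only [smul_eq_mul, h0] at hcomb
      have h2 : (1 - s / u) * 0 + s / u * u = s := by field_simp; ring
      rw [h2] at hcomb
      have : s / u * φ u = k * s := by rw [hk]; field_simp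
      linarith
    -- lower bound: φ s ≥ k * s for s ∈ [0, u)
    have hlower : ∀ s : ℝ, 0 ≤ s → s < u → k * s ≤ φ s := by
      intro s hs hsu
      have hhalf : φ (u / 2) = k * (u / 2) := by rw [heq, hk]; field_simp
      have h3 : k * u = φ u := by rw [hk]; exact div_mul_cancel₀ _ hu0.ne'
      clear hk
      clear_value k
      rcases lt_trichotomy s (u / 2) with hlt | heq2 | hgt
      · -- slope over [s, u/2] ≤ slope over [u/2, u]
        have := hconv.slope_mono_adjacent (show s ∈ Set.Ici (0:ℝ) from hs)
          (show u ∈ Set.Ici (0:ℝ) from hu0.le) hlt (by linarith)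
        rw [hhalf] at this
        have hd1 : (0:ℝ) < u / 2 - s := by linarith
        have hd2 : (0:ℝ) < u - u / 2 := by linarith
        have hrhs : (φ u - k * (u / 2)) / (u - u / 2) = k := by
          have h4 : u - u / 2 = u / 2 := by ring
          have h5 : φ u - k * (u / 2) = k * (u / 2) := by linear_combination -h3
          rw [h4, h5]
          exact mul_div_cancel_right₀ k (by linarith : (u:ℝ) / 2 ≠ 0)
        rw [hrhs] at this
        rw [div_le_iff₀ hd1] at this
        nlinarith
      · rw [heq2, ← hhalf]
      · -- slope over [0, u/2] ≤ slope over [u/2, s]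
        have := hconv.slope_mono_adjacent (Set.self_mem_Ici)
          (show s ∈ Set.Ici (0:ℝ) from hs) (by linarith : (0:ℝ) < u / 2) hgt
        rw [hhalf, h0] at this
        have hlhs : (k * (u / 2) - 0) / (u / 2 - 0) = k := by
          rw [sub_zero, sub_zero]
          exact mul_div_cancel_right₀ k (by linarith : (u:ℝ) / 2 ≠ 0)
        rw [hlhs] at this
        have hd1 : (0:ℝ) < s - u / 2 := by linarith
        rw [le_div_iff₀ hd1] at this
        nlinarith
    have hmem : ENNReal.ofReal u ∈ {p : ENNReal | ∃ u : ℝ, 0 < u ∧ p = ENNReal.ofReal u ∧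
          ∃ k : ℝ, 0 ≤ k ∧ ∀ s : ℝ, 0 ≤ s → s < u → φ s = k * s} := by
      exact ⟨u, hu0, rfl, k, hk0, fun s hs hsu =>
        le_antisymm (hupper s hs hsu.le) (hlower s hs hsu)⟩
    have hle : ENNReal.ofReal u ≤ sSup {p : ENNReal | ∃ u : ℝ, 0 < u ∧ p = ENNReal.ofReal u ∧
          ∃ k : ℝ, 0 ≤ k ∧ ∀ s : ℝ, 0 ≤ s → s < u → φ s = k * s} := le_sSup hmem
    have : ENNReal.ofReal u < ENNReal.ofReal u :=
      lt_of_le_of_lt hle (lt_of_lt_of_le hd (ENNReal.ofReal_le_ofReal hu))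
    exact lt_irrefl _ this
  -- positivity of φ on [a, b]
  have hpos : ∀ u : ℝ, a ≤ u → 0 < φ u := by
    intro u hu
    have h1 := hkey u hu
    have h2 : 0 ≤ φ (u / 2) := hnonneg _ (by linarith [lt_of_lt_of_le ha0 hu])
    linarith
  -- continuity of φ on (0, ∞)
  have hcont : ContinuousOn φ (Set.Ioi 0) := by
    have := hconv.continuousOn_interior
    rwa [interior_Ici] at this
  -- the function F u = 2 * φ (u/2) / φ u is continuous on [a, b]
  set F : ℝ → ℝ := fun u => 2 * φ (u / 2) / φ u with hF
  have hFc : ContinuousOn F (Set.Icc a b) := by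
    apply ContinuousOn.div
    · apply ContinuousOn.mul continuousOn_const
      apply hcont.comp (continuousOn_id.div_const 2)
      intro x hx
      exact Set.mem_Ioi.mpr (by simp only [id]; linarith [hx.1, ha0])
    · exact hcont.mono (fun x hx => Set.mem_Ioi.mpr (lt_of_lt_of_le ha0 hx.1))
    · intro x hx
      exact ne_of_gt (hpos x hx.1)
  have hne : (Set.Icc a b).Nonempty := Set.nonempty_Icc.mpr hab
  obtain ⟨u₀, hu₀, hmax⟩ := isCompact_Icc.exists_isMaxOn hne hFc
  refine ⟨max (F u₀) (1/2), lt_of_lt_of_le (by norm_num) (le_max_right _ _),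
    max_lt ?_ (by norm_num), fun u hua hub => le_trans (hmax ⟨hua, hub⟩) (le_max_left _ _)⟩
  · -- F u₀ < 1
    have h1 := hkey u₀ hu₀.1
    have h2 := hpos u₀ hu₀.1
    rw [hF]
    exact (div_lt_one h2).mpr h1
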